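/- Let G be a graph with n vertices, λ an eigenvalue of G of multiplicity k > 0, and X ⊂ V(G). Then X is a λ-star set of G if and only if ℝ^n decomposes as the direct sum of the eigenspace E_G(λ) and the coordinate subspace spanned by the standard basis vectors e_i with i ∉ X. -/

import Mathlib

open Matrix

noncomputable def eigSpace {m : Type*} [Fintype m] [DecidableEq m]
    (A : Matrix m m ℝ) (lam : ℝ) : Submodule ℝ (m → ℝ) :=
  LinearMap.ker (Matrix.mulVecLin (A - lam • (1 : Matrix m m ℝ)))

/-- `lam` is an eigenvalue of the real matrix `A`. -/
def IsEig {m : Type*} [Fintype m] [DecidableEq m] (A : Matrix m m ℝ) (lam : ℝ) : Prop :=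
  eigSpace A lam ≠ ⊥

/-- The multiplicity of `lam` as an eigenvalue of `A`. -/
noncomputable def multE {m : Type*} [Fintype m] [DecidableEq m]
    (A : Matrix m m ℝ) (lam : ℝ) : ℕ :=
  Module.finrank ℝ (eigSpace A lam)

/-- `lam` is a main eigenvalue of `A`: its eigenspace is not orthogonal to the all-ones
vector. -/
def IsMainEig {m : Type*} [Fintype m] [DecidableEq m] (A : Matrix m m ℝ) (lam : ℝ) : Prop :=
  ∃ x ∈ eigSpace A lam, ∑ i, x i ≠ 0

/-- The adjacency matrix of the subgraph of `G` induced by the vertex set `S`. -/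
def indMatrix {n : ℕ} (G : SimpleGraph (Fin n)) [DecidableRel G.Adj] (S : Finset (Fin n)) :
    Matrix S S ℝ :=
  (G.adjMatrix ℝ).submatrix (fun i => (i : Fin n)) (fun j => (j : Fin n))

/-- `X` is a `lam`-star set of `G`: its cardinality equals the multiplicity of `lam`
and `lam` is not an eigenvalue of the subgraph induced by the complement of `X`. -/
def IsStarSet {n : ℕ} (G : SimpleGraph (Fin n)) [DecidableRel G.Adj] (lam : ℝ)
    (X : Finset (Fin n)) : Prop :=
  X.card = multE (G.adjMatrix ℝ) lam ∧ ¬ IsEig (indMatrix G Xᶜ) lam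

/-- The block `N` of the adjacency matrix: rows indexed by `Xᶜ`, columns by `X`. -/
def Nmat {n : ℕ} (G : SimpleGraph (Fin n)) [DecidableRel G.Adj] (X : Finset (Fin n)) :
    Matrix ↥(Xᶜ) ↥X ℝ :=
  (G.adjMatrix ℝ).submatrix (fun i => (i : Fin n)) (fun j => (j : Fin n))

/-- The block `C` of the adjacency matrix: the adjacency matrix of `G - X`. -/
def Cmat {n : ℕ} (G : SimpleGraph (Fin n)) [DecidableRel G.Adj] (X : Finset (Fin n)) :
    Matrix ↥(Xᶜ) ↥(Xᶜ) ℝ :=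
  indMatrix G Xᶜ

lemma span_single_eq_ker {n : ℕ} (X : Finset (Fin n)) :
    Submodule.span ℝ (Set.range fun i : ↥(Xᶜ) => Pi.single (i : Fin n) (1 : ℝ))
      = LinearMap.ker (LinearMap.funLeft ℝ ℝ (fun j : ↥X => (j : Fin n))) := by
  apply le_antisymm
  · rw [Submodule.span_le]
    rintro _ ⟨i, rfl⟩
    simp only [SetLike.mem_coe, LinearMap.mem_ker]
    funext j
    have hne : (j : Fin n) ≠ (i : Fin n) := by
      intro h
      have hi := i.2
      rw [Finset.mem_compl] at hi
      exact hi (h ▸ j.2)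
    simp [LinearMap.funLeft_apply, Pi.single_apply, hne]
  · intro x hx
    have hx' : ∀ j ∈ X, x j = 0 := by
      intro j hj
      have := congrFun (LinearMap.mem_ker.mp hx) ⟨j, hj⟩
      simpa [LinearMap.funLeft_apply] using this
    have hrep : x = ∑ i : ↥(Xᶜ), x i • (Pi.single (i : Fin n) (1 : ℝ) : Fin n → ℝ) := by
      funext j
      rw [Finset.sum_apply]
      simp only [Pi.smul_apply, Pi.single_apply, smul_eq_mul, mul_ite, mul_one, mul_zero]
      by_cases hj : j ∈ Xᶜ
      · rw [Finset.sum_eq_single (⟨j, hj⟩ : ↥(Xᶜ))]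
        · simp
        · intro b _ hb
          have : j ≠ (b : Fin n) := fun h => hb (by ext; simp [h])
          simp [this]
        · simp
      · rw [Finset.sum_eq_zero, hx' j (by simpa using hj)]
        intro b _
        have : j ≠ (b : Fin n) := by
          intro h; exact hj (h ▸ b.2)
        simp [this]
    rw [hrep]
    exact Submodule.sum_mem _ fun i _ =>
      Submodule.smul_mem _ _ (Submodule.subset_span ⟨i, rfl⟩)

lemma blk {n : ℕ} (G : SimpleGraph (Fin n)) [DecidableRel G.Adj] (lam : ℝ)
    (X : Finset (Fin n)) (x : Fin n → ℝ) (hx : ∀ j ∈ X, x j = 0) (i : ↥(Xᶜ)) :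
    ((G.adjMatrix ℝ - lam • 1) *ᵥ x) (i : Fin n)
      = ((indMatrix G Xᶜ - lam • (1 : Matrix ↥(Xᶜ) ↥(Xᶜ) ℝ)) *ᵥ (fun j : ↥(Xᶜ) => x j)) i := by
  simp only [Matrix.mulVec, dotProduct, Matrix.sub_apply, Matrix.smul_apply,
    Matrix.one_apply, indMatrix, Matrix.submatrix_apply, smul_eq_mul]
  rw [show (∑ j : Fin n, (G.adjMatrix ℝ (i : Fin n) j - lam * if (i : Fin n) = j then 1 else 0) * x j)
      = ∑ j ∈ Xᶜ, (G.adjMatrix ℝ (i : Fin n) j - lam * if (i : Fin n) = j then 1 else 0) * x j from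
    (Finset.sum_subset (Finset.subset_univ _) (fun j _ hj => by
      have : j ∈ X := by simpa using hj
      simp [hx j this])).symm]
  rw [← Finset.sum_coe_sort]
  apply Finset.sum_congr rfl
  intro j _
  congr 2
  exact congrArg (lam * ·) (if_congr Subtype.ext_iff.symm rfl rfl)

theorem stmt1 {n : ℕ} (G : SimpleGraph (Fin n)) [DecidableRel G.Adj] (lam : ℝ)
    (k : ℕ) (hk : k = multE (G.adjMatrix ℝ) lam) (hk0 : 0 < k)
    (X : Finset (Fin n)) (hX : X ⊂ Finset.univ) :
    IsStarSet G lam X ↔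
      IsCompl (eigSpace (G.adjMatrix ℝ) lam)
        (Submodule.span ℝ (Set.range fun i : ↥(Xᶜ) => Pi.single (i : Fin n) (1 : ℝ))) := by
  rw [span_single_eq_ker]
  set A := G.adjMatrix ℝ with hA
  set E := eigSpace A lam with hE
  set π := LinearMap.funLeft ℝ ℝ (fun j : ↥X => (j : Fin n)) with hπ
  have hπs : Function.Surjective π :=
    LinearMap.funLeft_surjective_of_injective ℝ ℝ _ Subtype.val_injective
  have hdimV : Module.finrank ℝ (Fin n → ℝ) = n := by
    simp [Module.finrank_pi]
  have hker : ∀ x : Fin n → ℝ, x ∈ LinearMap.ker π ↔ ∀ j ∈ X, x j = 0 := by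
    intro x
    constructor
    · intro hx j hj
      have := congrFun (LinearMap.mem_ker.mp hx) ⟨j, hj⟩
      simpa [hπ, LinearMap.funLeft_apply] using this
    · intro h
      rw [LinearMap.mem_ker]
      funext j
      simpa [hπ, LinearMap.funLeft_apply] using h j j.2
  have hkerdim : Module.finrank ℝ (LinearMap.ker π) + X.card = n := by
    have h1 := LinearMap.finrank_range_add_finrank_ker π
    rw [LinearMap.range_eq_top.mpr hπs, finrank_top, hdimV] at h1
    have h2 : Module.finrank ℝ (↥X → ℝ) = X.card := by simp [Module.finrank_pi]
    omega
  have hmultE : multE A lam = Module.finrank ℝ E := rfl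
  -- membership in E
  have hmemE : ∀ x : Fin n → ℝ, x ∈ E ↔ (A - lam • 1) *ᵥ x = 0 := by
    intro x
    rw [hE, eigSpace, LinearMap.mem_ker, Matrix.mulVecLin_apply]
  constructor
  · rintro ⟨hcard, hnoteig⟩
    have heigbot : eigSpace (indMatrix G Xᶜ) lam = ⊥ := by
      by_contra h; exact hnoteig h
    have hdisj : Disjoint E (LinearMap.ker π) := by
      rw [Submodule.disjoint_def]
      intro x hxE hxK
      have hx0 : ∀ j ∈ X, x j = 0 := (hker x).mp hxK
      have hy : (fun j : ↥(Xᶜ) => x j) ∈ eigSpace (indMatrix G Xᶜ) lam := by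
        rw [eigSpace, LinearMap.mem_ker, Matrix.mulVecLin_apply]
        funext i
        rw [← blk G lam X x hx0 i]
        rw [(hmemE x).mp hxE]
        rfl
      rw [heigbot, Submodule.mem_bot] at hy
      funext j
      by_cases hj : j ∈ X
      · exact hx0 j hj
      · have hj' : j ∈ Xᶜ := Finset.mem_compl.mpr hj
        exact congrFun hy ⟨j, hj'⟩
    refine ⟨hdisj, ?_⟩
    rw [codisjoint_iff]
    apply Submodule.eq_top_of_finrank_eq
    have := Submodule.finrank_sup_add_finrank_inf_eq E (LinearMap.ker π)
    rw [hdisj.eq_bot, finrank_bot, add_zero] at this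
    rw [this, hdimV, ← hmultE, ← hcard]
    omega
  · intro hc
    -- π restricted to E is surjective
    have hsurjE : ∀ w : ↥X → ℝ, ∃ u ∈ E, ∀ j : ↥X, u (j : Fin n) = w j := by
      intro w
      obtain ⟨z, hz⟩ := hπs w
      have hz' : z ∈ E ⊔ LinearMap.ker π := by rw [hc.codisjoint.eq_top]; trivial
      obtain ⟨u, hu, m, hm, hum⟩ := Submodule.mem_sup.mp hz'
      refine ⟨u, hu, fun j => ?_⟩
      have : π u = w := by
        rw [← hz, ← hum, map_add, LinearMap.mem_ker.mp hm, add_zero]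
      exact congrFun this j
    have hdims := Submodule.finrank_add_eq_of_isCompl hc
    rw [hdimV] at hdims
    have hcard : X.card = multE A lam := by
      rw [hmultE]; omega
    refine ⟨hcard, ?_⟩
    intro heig
    obtain ⟨y, hy, hy0⟩ := Submodule.exists_mem_ne_zero_of_ne_bot heig
    rw [eigSpace, LinearMap.mem_ker, Matrix.mulVecLin_apply] at hy
    set x : Fin n → ℝ := fun i => if h : i ∈ Xᶜ then y ⟨i, h⟩ else 0 with hxdef
    have hxX : ∀ j ∈ X, x j = 0 := by
      intro j hj
      simp only [hxdef]
      rw [dif_neg (by simpa using hj)]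
    have hxy : (fun j : ↥(Xᶜ) => x j) = y := by
      funext i
      simp only [hxdef]
      rw [dif_pos i.2]
    set v : Fin n → ℝ := (A - lam • 1) *ᵥ x with hvdef
    have hvXc : ∀ i : ↥(Xᶜ), v (i : Fin n) = 0 := by
      intro i
      rw [hvdef, blk G lam X x hxX i, hxy, hy]
      rfl
    have hMsymm : (A - lam • 1)ᵀ = A - lam • 1 := by
      rw [Matrix.transpose_sub, Matrix.transpose_smul, Matrix.transpose_one,
        SimpleGraph.transpose_adjMatrix]
    have hvE : ∀ u ∈ E, v ⬝ᵥ u = 0 := by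
      intro u hu
      have h1 : v = x ᵥ* (A - lam • 1) := by
        rw [hvdef, ← Matrix.mulVec_transpose, hMsymm]
      rw [h1, ← Matrix.dotProduct_mulVec, (hmemE u).mp hu, dotProduct_zero]
    obtain ⟨u, huE, huv⟩ := hsurjE (fun j : ↥X => v (j : Fin n))
    have hsum : ∑ i ∈ X, v i * v i = 0 := by
      have h0 := hvE u huE
      rw [dotProduct] at h0
      rw [show (∑ i : Fin n, v i * u i) = ∑ i ∈ X, v i * u i from
        (Finset.sum_subset (Finset.subset_univ _) (fun i _ hi => by
          rw [hvXc ⟨i, Finset.mem_compl.mpr (by simpa using hi)⟩, zero_mul])).symm] at h0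
      rw [← h0]
      apply Finset.sum_congr rfl
      intro i hi
      rw [huv ⟨i, hi⟩]
    have hvX : ∀ i ∈ X, v i = 0 := by
      intro i hi
      have := (Finset.sum_eq_zero_iff_of_nonneg (fun i _ => mul_self_nonneg (v i))).mp hsum i hi
      exact mul_self_eq_zero.mp this
    have hv0 : v = 0 := by
      funext i
      by_cases hi : i ∈ X
      · exact hvX i hi
      · exact hvXc ⟨i, Finset.mem_compl.mpr hi⟩
    have hxE : x ∈ E := (hmemE x).mpr (by rw [← hvdef, hv0])
    have hxK : x ∈ LinearMap.ker π := (hker x).mpr hxX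
    have hx0 : x = 0 := (Submodule.disjoint_def.mp hc.disjoint) x hxE hxK
    apply hy0
    funext i
    have := congrFun hx0 (i : Fin n)
    rw [← hxy]
    simpa using this
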